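/- Let W and W' be walks in the tensor product G × H with W ~ W' (square-equivalence in G × H). Then the projections satisfy W|_G ~ W'|_G in G and W|_H ~ W'|_H in H. -/

import Mathlib

open SimpleGraph

variable {α β γ : Type*}

/-- Tensor (categorical) product of simple graphs. -/
def tensor (G : SimpleGraph α) (H : SimpleGraph β) : SimpleGraph (α × β) where
  Adj x y := G.Adj x.1 y.1 ∧ H.Adj x.2 y.2
  symm := ⟨fun _ _ ⟨h1, h2⟩ => ⟨h1.symm, h2.symm⟩⟩
  loopless := ⟨fun x ⟨h1, _⟩ => G.irrefl h1⟩

/-- Projection of a walk in the tensor product to the first factor. -/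
def projG {G : SimpleGraph α} {H : SimpleGraph β} :
    ∀ {x y : α × β}, (tensor G H).Walk x y → G.Walk x.1 y.1
  | _, _, SimpleGraph.Walk.nil => SimpleGraph.Walk.nil
  | _, _, SimpleGraph.Walk.cons h p => SimpleGraph.Walk.cons (show G.Adj _ _ ∧ H.Adj _ _ from h).1 (projG p)

/-- Projection of a walk in the tensor product to the second factor. -/
def projH {G : SimpleGraph α} {H : SimpleGraph β} :
    ∀ {x y : α × β}, (tensor G H).Walk x y → H.Walk x.2 y.2
  | _, _, SimpleGraph.Walk.nil => SimpleGraph.Walk.nil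
  | _, _, SimpleGraph.Walk.cons h p => SimpleGraph.Walk.cons (show G.Adj _ _ ∧ H.Adj _ _ from h).2 (projH p)

/-- One-step reduction: deleting a consecutive backtracking pair `e, e⁻¹`. -/
inductive RedStep (G : SimpleGraph α) : ∀ {u v : α}, G.Walk u v → G.Walk u v → Prop
  | cancel {u v a b : α} (h : G.Adj a b) (p : G.Walk u a) (q : G.Walk a v) :
      RedStep G (p.append (SimpleGraph.Walk.cons h (SimpleGraph.Walk.cons h.symm q)))
        (p.append q)

/-- A walk is reduced if no backtracking cancellation applies to it. -/
def Reduced {G : SimpleGraph α} {u v : α} (W : G.Walk u v) : Prop :=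
  ∀ W', ¬ RedStep G W W'

/-- Homotopy of walks: equivalence generated by cancellations. -/
def RedEquiv (G : SimpleGraph α) {u v : α} (W W' : G.Walk u v) : Prop :=
  Relation.EqvGen (fun p q => RedStep G p q) W W'

/-- One elementary step of square-equivalence. -/
inductive SqStep (G : SimpleGraph α) : ∀ {u v : α}, G.Walk u v → G.Walk u v → Prop
  | cancel {u v a b : α} (h : G.Adj a b) (p : G.Walk u a) (q : G.Walk a v) :
      SqStep G (p.append (SimpleGraph.Walk.cons h (SimpleGraph.Walk.cons h.symm q)))
        (p.append q)
  | square {u v a b c d : α} (hab : G.Adj a b) (hbc : G.Adj b c) (had : G.Adj a d)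
      (hdc : G.Adj d c) (p : G.Walk u a) (q : G.Walk c v) :
      SqStep G (p.append (SimpleGraph.Walk.cons hab (SimpleGraph.Walk.cons hbc q)))
        (p.append (SimpleGraph.Walk.cons had (SimpleGraph.Walk.cons hdc q)))

/-- Square-equivalence of walks. -/
def SqEquiv (G : SimpleGraph α) {u v : α} (W W' : G.Walk u v) : Prop :=
  Relation.EqvGen (fun p q => SqStep G p q) W W'

/-- Natural-number power of a closed walk (iterated concatenation). -/
def wpow {G : SimpleGraph α} {u : α} (W : G.Walk u u) : ℕ → G.Walk u u
  | 0 => SimpleGraph.Walk.nil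
  | n + 1 => W.append (wpow W n)

/-- Integer power of a closed walk. -/
def wzpow {G : SimpleGraph α} {u : α} (W : G.Walk u u) : ℤ → G.Walk u u
  | Int.ofNat n => wpow W n
  | Int.negSucc n => wpow W.reverse (n + 1)

/-- A walk `p` is a prefix of `q` (same starting vertex). -/
def WalkPrefix {G : SimpleGraph α} {u x y : α} (p : G.Walk u x) (q : G.Walk u y) : Prop :=
  ∃ r : G.Walk x y, q = p.append r

/-- `K` is square-free: every square is trivial. -/
def SqFree (K : SimpleGraph γ) : Prop :=
  ∀ a b c d : γ, K.Adj a b → K.Adj b c → K.Adj c d → K.Adj d a → a = c ∨ b = d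

/-- The circular clique `K_{p/q}` on `ZMod p`. -/
def circClique (p q : ℕ) : SimpleGraph (ZMod p) where
  Adj i j := i ≠ j ∧ ∃ k : ℕ, q ≤ k ∧ k ≤ p - q ∧ (j = i + (k : ZMod p) ∨ i = j + (k : ZMod p))
  symm := by
    constructor
    rintro i j ⟨hne, k, h1, h2, h3 | h3⟩
    · exact ⟨hne.symm, k, h1, h2, Or.inr h3⟩
    · exact ⟨hne.symm, k, h1, h2, Or.inl h3⟩
  loopless := ⟨fun i h => h.1 rfl⟩


lemma projG_append {G : SimpleGraph α} {H : SimpleGraph β} {x y z : α × β}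
    (p : (tensor G H).Walk x y) (q : (tensor G H).Walk y z) :
    projG (p.append q) = (projG p).append (projG q) := by
  induction p with
  | nil => rfl
  | cons h p ih => simp [projG, Walk.append, ih]

lemma projH_append {G : SimpleGraph α} {H : SimpleGraph β} {x y z : α × β}
    (p : (tensor G H).Walk x y) (q : (tensor G H).Walk y z) :
    projH (p.append q) = (projH p).append (projH q) := by
  induction p with
  | nil => rfl
  | cons h p ih => simp [projH, Walk.append, ih]

lemma sqStep_projG {G : SimpleGraph α} {H : SimpleGraph β} {x y : α × β}
    {W W' : (tensor G H).Walk x y} (h : SqStep (tensor G H) W W') :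
    SqStep G (projG W) (projG W') := by
  cases h with
  | cancel h p q =>
      rw [projG_append, projG_append]
      exact SqStep.cancel (show G.Adj _ _ ∧ H.Adj _ _ from h).1 (projG p) (projG q)
  | square hab hbc had hdc p q =>
      rw [projG_append, projG_append]
      exact SqStep.square (show G.Adj _ _ ∧ H.Adj _ _ from hab).1 (show G.Adj _ _ ∧ H.Adj _ _ from hbc).1 (show G.Adj _ _ ∧ H.Adj _ _ from had).1 (show G.Adj _ _ ∧ H.Adj _ _ from hdc).1 (projG p) (projG q)

lemma sqStep_projH {G : SimpleGraph α} {H : SimpleGraph β} {x y : α × β}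
    {W W' : (tensor G H).Walk x y} (h : SqStep (tensor G H) W W') :
    SqStep H (projH W) (projH W') := by
  cases h with
  | cancel h p q =>
      rw [projH_append, projH_append]
      exact SqStep.cancel (show G.Adj _ _ ∧ H.Adj _ _ from h).2 (projH p) (projH q)
  | square hab hbc had hdc p q =>
      rw [projH_append, projH_append]
      exact SqStep.square (show G.Adj _ _ ∧ H.Adj _ _ from hab).2 (show G.Adj _ _ ∧ H.Adj _ _ from hbc).2 (show G.Adj _ _ ∧ H.Adj _ _ from had).2 (show G.Adj _ _ ∧ H.Adj _ _ from hdc).2 (projH p) (projH q)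

/-- square-equivalence in the tensor product projects to
square-equivalence in each factor. -/
theorem sqEquiv_proj {G : SimpleGraph α} {H : SimpleGraph β} {x y : α × β}
    (W W' : (tensor G H).Walk x y) (h : SqEquiv (tensor G H) W W') :
    SqEquiv G (projG W) (projG W') ∧ SqEquiv H (projH W) (projH W') := by
  induction h with
  | rel p q hpq => exact ⟨.rel _ _ (sqStep_projG hpq), .rel _ _ (sqStep_projH hpq)⟩
  | refl p => exact ⟨.refl _, .refl _⟩
  | symm p q _ ih => exact ⟨.symm _ _ ih.1, .symm _ _ ih.2⟩
  | trans p q r _ _ ih1 ih2 =>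
      exact ⟨.trans _ _ _ ih1.1 ih2.1, .trans _ _ _ ih1.2 ih2.2⟩
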